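/- Let $R$ be a commutative ring and $a = \sum_i a_i t^i \in R((t))$. For each integer $m$, the set $\{\mathfrak{p} \in \operatorname{Spec} R \mid \operatorname{ord}_{a}(\mathfrak{p}) \le m\}$ equals the finite union $\bigcup_{i \le m} \operatorname{Spec} R_{a_i}$ of distinguished open sets, and in particular is a retrocompact open subset of $\operatorname{Spec} R$; consequently $\{\operatorname{ord}_a = m\}$ is locally closed and constructible. -/

import Mathlib

/-- A subset of a topological space is retrocompact if its intersection with every
compact open subset is compact (equivalently, its inclusion is quasi-compact). -/
def IsRetrocompactSet {X : Type*} [TopologicalSpace X] (s : Set X) : Prop :=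
  ∀ U : Set X, IsOpen U → IsCompact U → IsCompact (s ∩ U)

/-- A subset is constructible if it is a finite union of differences of retrocompact
open subsets. -/
def IsConstructible {X : Type*} [TopologicalSpace X] (s : Set X) : Prop :=
  ∃ (k : ℕ) (U V : Fin k → Set X),
    (∀ i, IsOpen (U i) ∧ IsRetrocompactSet (U i) ∧ IsOpen (V i) ∧ IsRetrocompactSet (V i))
      ∧ s = ⋃ i, (U i \ V i)

/-- `{x ∈ Spec R ∣ ord_a(x) ≤ m}`: the set of primes at which some coefficient
`a.coeff i` with `i ≤ m` does not vanish. -/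
def ordLe {R : Type*} [CommRing R] (a : LaurentSeries R) (m : ℤ) :
    Set (PrimeSpectrum R) :=
  {x | ∃ i ≤ m, a.coeff i ∉ x.asIdeal}

/-- A basic open in `Spec R` is retrocompact. -/
lemma isRetrocompact_basicOpen {R : Type*} [CommRing R] (f : R) :
    IsRetrocompactSet (PrimeSpectrum.basicOpen f : Set (PrimeSpectrum R)) := by
  intro U hU hUc
  obtain ⟨t, ht⟩ := PrimeSpectrum.isCompact_isOpen_iff.mp ⟨hUc, hU⟩
  have hUnion : (PrimeSpectrum.basicOpen f : Set (PrimeSpectrum R)) ∩ U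
      = ⋃ g ∈ t, (PrimeSpectrum.basicOpen (f * g) : Set (PrimeSpectrum R)) := by
    rw [← ht]
    ext x
    simp only [Set.mem_inter_iff, PrimeSpectrum.mem_basicOpen, Set.mem_compl_iff,
      PrimeSpectrum.mem_zeroLocus, Set.mem_iUnion, Finset.mem_coe]
    constructor
    · rintro ⟨hf, hsub⟩
      obtain ⟨g, hg, hgnot⟩ := Set.not_subset.mp hsub
      exact ⟨g, hg, fun h => (x.isPrime.mem_or_mem h).elim hf hgnot⟩
    · rintro ⟨g, hg, hfg⟩
      refine ⟨fun h => hfg (Ideal.mul_mem_right _ _ h), ?_⟩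
      intro hsub
      exact hfg (Ideal.mul_mem_left _ _ (hsub hg))
  rw [hUnion]
  exact t.finite_toSet.isCompact_biUnion fun g _ => PrimeSpectrum.isCompact_basicOpen _

/-- `ordLe a m` is a finite union of basic opens. -/
lemma ordLe_eq_biUnion {R : Type*} [CommRing R] (a : LaurentSeries R) (m : ℤ) :
    ∃ s : Finset ℤ, (∀ i ∈ s, i ≤ m) ∧
      ordLe a m = ⋃ i ∈ s, (PrimeSpectrum.basicOpen (a.coeff i) : Set (PrimeSpectrum R)) := by
  have hwf : (a.support ∩ Set.Iic m).IsWF :=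
    (a.isPWO_support.mono Set.inter_subset_left).isWF
  have hfin : (a.support ∩ Set.Iic m).Finite := by
    rcases (a.support ∩ Set.Iic m).eq_empty_or_nonempty with h | h
    · simp [h]
    · refine Set.Finite.subset (Set.finite_Icc (hwf.min h) m) fun x hx => ?_
      exact ⟨hwf.min_le h hx, hx.2⟩
  refine ⟨hfin.toFinset, fun i hi => (hfin.mem_toFinset.mp hi).2, ?_⟩
  ext x
  simp only [ordLe, Set.mem_setOf_eq, Set.mem_iUnion, PrimeSpectrum.mem_basicOpen,
    hfin.mem_toFinset, exists_prop]
  constructor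
  · rintro ⟨i, him, hi⟩
    have hne : a.coeff i ≠ 0 := fun h => hi (h ▸ x.asIdeal.zero_mem)
    exact ⟨i, ⟨hne, him⟩, hi⟩
  · rintro ⟨i, ⟨_, him⟩, hi⟩
    exact ⟨i, him, hi⟩

lemma isOpen_ordLe {R : Type*} [CommRing R] (a : LaurentSeries R) (m : ℤ) :
    IsOpen (ordLe a m) := by
  obtain ⟨s, -, hs⟩ := ordLe_eq_biUnion a m
  rw [hs]
  exact isOpen_biUnion fun i _ => (PrimeSpectrum.basicOpen _).2

lemma isRetrocompact_ordLe {R : Type*} [CommRing R] (a : LaurentSeries R) (m : ℤ) :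
    IsRetrocompactSet (ordLe a m) := by
  obtain ⟨s, -, hs⟩ := ordLe_eq_biUnion a m
  intro U hU hUc
  rw [hs, Set.iUnion₂_inter]
  exact s.finite_toSet.isCompact_biUnion fun i _ =>
    isRetrocompact_basicOpen (a.coeff i) U hU hUc

/-- For `a = ∑ aᵢ tⁱ ∈ R((t))` and `m ∈ ℤ`, the set
`{ord_a ≤ m}` is the finite union `⋃_{i ≤ m} Spec R_{aᵢ}` of distinguished open sets;
in particular it is a retrocompact open subset of `Spec R`, and consequently
`{ord_a = m} = {ord_a ≤ m} \ {ord_a ≤ m-1}` is locally closed and constructible. -/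
theorem ordLe_constructible
    (R : Type*) [CommRing R] (a : LaurentSeries R) (m : ℤ) :
    (∃ s : Finset ℤ, (∀ i ∈ s, i ≤ m) ∧
        ordLe a m = ⋃ i ∈ s, (PrimeSpectrum.basicOpen (a.coeff i) : Set (PrimeSpectrum R)))
    ∧ IsOpen (ordLe a m) ∧ IsRetrocompactSet (ordLe a m)
    ∧ IsLocallyClosed (ordLe a m \ ordLe a (m - 1))
    ∧ IsConstructible (ordLe a m \ ordLe a (m - 1)) := by
  refine ⟨ordLe_eq_biUnion a m, isOpen_ordLe a m, isRetrocompact_ordLe a m, ?_, ?_⟩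
  · exact ⟨ordLe a m, (ordLe a (m - 1))ᶜ, isOpen_ordLe a m,
      (isOpen_ordLe a (m - 1)).isClosed_compl, (Set.diff_eq _ _)⟩
  · refine ⟨1, fun _ => ordLe a m, fun _ => ordLe a (m - 1), fun _ =>
      ⟨isOpen_ordLe a m, isRetrocompact_ordLe a m,
       isOpen_ordLe a (m - 1), isRetrocompact_ordLe a (m - 1)⟩, ?_⟩
    simp [Set.iUnion_const]
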